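/- For any positive integer b, the integral from 0 to 1 of b * Pr[Pois(b*t) < b] dt equals E[min(Pois(b), b)]. -/

import Mathlib

open Real Finset

/-- Poisson pmf with rate `l`. -/
noncomputable def ppmf (l : ℝ) (k : ℕ) : ℝ := Real.exp (-l) * l ^ k / (Nat.factorial k)

/-- Expected value of `min(Pois(l), b)`. -/
noncomputable def truncMean (l : ℝ) (b : ℕ) : ℝ := ∑' k : ℕ, ppmf l k * (min k b : ℕ)

lemma summable_ppmf (l : ℝ) : Summable (fun k => ppmf l k) := by
  have := (Real.summable_pow_div_factorial l).mul_left (Real.exp (-l))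
  simpa [ppmf, mul_div_assoc] using this

lemma tsum_ppmf (l : ℝ) : ∑' k, ppmf l k = 1 := by
  have h : HasSum (fun n : ℕ => l ^ n / (Nat.factorial n : ℝ)) (Real.exp l) := by
    rw [Real.exp_eq_exp_ℝ]
    exact NormedSpace.expSeries_div_hasSum_exp l
  calc ∑' k, ppmf l k = Real.exp (-l) * Real.exp l := by
        simpa [ppmf, mul_div_assoc] using (h.mul_left (Real.exp (-l))).tsum_eq
    _ = 1 := by rw [← Real.exp_add]; simp

lemma hasDerivAt_ppmf_succ (c : ℝ) (k : ℕ) (t : ℝ) :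
    HasDerivAt (fun t => ppmf (c * t) (k + 1)) (c * (ppmf (c * t) k - ppmf (c * t) (k + 1))) t := by
  have hct : HasDerivAt (fun t : ℝ => c * t) c t := by
    simpa using (hasDerivAt_id t).const_mul c
  have h1 : HasDerivAt (fun t => Real.exp (-(c * t))) (Real.exp (-(c * t)) * (-c)) t :=
    hct.neg.exp
  have h2 : HasDerivAt (fun t => (c * t) ^ (k + 1)) (((k + 1 : ℕ) : ℝ) * (c * t) ^ k * c) t := by
    simpa using hct.fun_pow (k + 1)
  have h3 := (h1.mul h2).div_const ((Nat.factorial (k + 1) : ℝ))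
  have hk0 : (Nat.factorial k : ℝ) ≠ 0 := Nat.cast_ne_zero.mpr (Nat.factorial_ne_zero k)
  have key : c * (ppmf (c * t) k - ppmf (c * t) (k + 1))
      = (Real.exp (-(c * t)) * (-c) * (c * t) ^ (k + 1)
          + Real.exp (-(c * t)) * (((k + 1 : ℕ) : ℝ) * (c * t) ^ k * c))
        / ((Nat.factorial (k + 1) : ℝ)) := by
    simp only [ppmf, Nat.factorial_succ]
    push_cast
    field_simp
    ring
  rw [key]
  simpa [ppmf] using h3

lemma hasDerivAt_sum (c : ℝ) (k : ℕ) (t : ℝ) :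
    HasDerivAt (fun t => -∑ j ∈ Finset.range (k + 1), ppmf (c * t) j) (c * ppmf (c * t) k) t := by
  induction k with
  | zero =>
    have hct : HasDerivAt (fun t : ℝ => c * t) c t := by
      simpa using (hasDerivAt_id t).const_mul c
    have h1 : HasDerivAt (fun t => Real.exp (-(c * t))) (Real.exp (-(c * t)) * (-c)) t :=
      hct.neg.exp
    have h2 : HasDerivAt (fun s => -Real.exp (-(c * s))) (-(Real.exp (-(c * t)) * (-c))) t := h1.fun_neg
    convert h2 using 1
    · funext s
      simp [Finset.sum_range_one, ppmf]
    · simp [ppmf]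
      ring
  | succ k ih =>
    have h : HasDerivAt (fun t => (-∑ j ∈ Finset.range (k + 1), ppmf (c * t) j) + -(ppmf (c * t) (k + 1)))
        (c * ppmf (c * t) k + -(c * (ppmf (c * t) k - ppmf (c * t) (k + 1)))) t := ih.fun_add (hasDerivAt_ppmf_succ c k t).fun_neg
    have hfun : (fun t => -∑ j ∈ Finset.range (k + 1 + 1), ppmf (c * t) j)
        = fun t => (-∑ j ∈ Finset.range (k + 1), ppmf (c * t) j) + -(ppmf (c * t) (k + 1)) := by
      funext s; rw [Finset.sum_range_succ]; ring
    rw [hfun]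
    convert h using 1
    ring

lemma continuous_ppmf (c : ℝ) (k : ℕ) : Continuous (fun t => ppmf (c * t) k) := by
  unfold ppmf
  fun_prop

lemma integral_ppmf (c : ℝ) (k : ℕ) :
    ∫ t in (0 : ℝ)..1, c * ppmf (c * t) k = 1 - ∑ j ∈ Finset.range (k + 1), ppmf c j := by
  have h := intervalIntegral.integral_eq_sub_of_hasDerivAt
    (f := fun t => -∑ j ∈ Finset.range (k + 1), ppmf (c * t) j)
    (f' := fun t => c * ppmf (c * t) k)
    (fun t _ => hasDerivAt_sum c k t)
    ((continuous_const.mul (continuous_ppmf c k)).intervalIntegrable 0 1)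
  rw [h]
  have h0 : ∑ j ∈ Finset.range (k + 1), ppmf 0 j = 1 := by
    rw [Finset.sum_eq_single 0]
    · simp [ppmf]
    · intro j _ hj
      simp [ppmf, zero_pow hj]
    · simp
  simp only [mul_one, mul_zero]
  rw [h0]
  ring

lemma min_cast (k b : ℕ) :
    ((min k b : ℕ) : ℝ) = ∑ i ∈ Finset.range b, (if i < k then (1 : ℝ) else 0) := by
  have hfil : (Finset.range b).filter (fun i => i < k) = Finset.range (min k b) := by
    ext i
    simp [Nat.lt_min, and_comm]
  rw [Finset.sum_boole, hfil, Finset.card_range]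

lemma tsum_tail (l : ℝ) (i : ℕ) :
    ∑' k : ℕ, (if i < k then ppmf l k else 0) = 1 - ∑ j ∈ Finset.range (i + 1), ppmf l j := by
  have hs := summable_ppmf l
  have hg : Summable (fun k => if i < k then ppmf l k else 0) :=
    (hs.indicator {k : ℕ | i < k}).congr fun k => by
      rw [Set.indicator_apply]; simp only [Set.mem_setOf_eq]
  have hh : Summable (fun k => if i < k then 0 else ppmf l k) :=
    (hs.indicator {k : ℕ | ¬ i < k}).congr fun k => by
      rw [Set.indicator_apply]
      simp only [Set.mem_setOf_eq]
      split <;> simp_all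
  have hhval : ∑' k : ℕ, (if i < k then 0 else ppmf l k)
      = ∑ j ∈ Finset.range (i + 1), ppmf l j := by
    rw [tsum_eq_sum (s := Finset.range (i + 1))]
    · refine Finset.sum_congr rfl fun j hj => ?_
      rw [Finset.mem_range] at hj
      simp [Nat.lt_irrefl, Nat.not_lt.mpr (Nat.lt_succ_iff.mp hj) ]
    · intro j hj
      rw [Finset.mem_range, not_lt, Nat.succ_le_iff] at hj
      simp [hj]
  have hadd : ∑' k, ppmf l k
      = (∑' k : ℕ, (if i < k then ppmf l k else 0)) + ∑' k : ℕ, (if i < k then 0 else ppmf l k) := by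
    rw [← Summable.tsum_add hg hh]
    refine tsum_congr fun k => ?_
    split <;> ring
  rw [tsum_ppmf] at hadd
  rw [hhval] at hadd
  linarith

theorem integral_eq_truncMean (b : ℕ) (hb : 0 < b) :
    (∫ t in (0 : ℝ)..1, (b : ℝ) * ∑ k ∈ Finset.range b, ppmf ((b : ℝ) * t) k)
      = truncMean b b := by
  have hL : (∫ t in (0 : ℝ)..1, (b : ℝ) * ∑ k ∈ Finset.range b, ppmf ((b : ℝ) * t) k)
      = ∑ k ∈ Finset.range b, (1 - ∑ j ∈ Finset.range (k + 1), ppmf (b : ℝ) j) := by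
    have hcong : ∀ t ∈ Set.uIcc (0 : ℝ) 1,
        (b : ℝ) * ∑ k ∈ Finset.range b, ppmf ((b : ℝ) * t) k
          = ∑ k ∈ Finset.range b, (b : ℝ) * ppmf ((b : ℝ) * t) k := fun t _ =>
      Finset.mul_sum _ _ _
    rw [intervalIntegral.integral_congr hcong,
      intervalIntegral.integral_finset_sum
        (fun k _ => (continuous_const.fun_mul (continuous_ppmf (b : ℝ) k)).intervalIntegrable 0 1)]
    exact Finset.sum_congr rfl fun k _ => integral_ppmf (b : ℝ) k
  have hR : truncMean (b : ℝ) b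
      = ∑ i ∈ Finset.range b, (1 - ∑ j ∈ Finset.range (i + 1), ppmf (b : ℝ) j) := by
    unfold truncMean
    have h1 : ∀ k : ℕ, ppmf (b : ℝ) k * ((min k b : ℕ) : ℝ)
        = ∑ i ∈ Finset.range b, (if i < k then ppmf (b : ℝ) k else 0) := by
      intro k
      rw [min_cast, Finset.mul_sum]
      exact Finset.sum_congr rfl fun i _ => by split <;> ring
    calc ∑' k : ℕ, ppmf (b : ℝ) k * ((min k b : ℕ) : ℝ)
        = ∑' k : ℕ, ∑ i ∈ Finset.range b, (if i < k then ppmf (b : ℝ) k else 0) :=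
          tsum_congr h1
      _ = ∑ i ∈ Finset.range b, ∑' k : ℕ, (if i < k then ppmf (b : ℝ) k else 0) := by
          refine Summable.tsum_finsetSum fun i _ => ?_
          exact ((summable_ppmf (b : ℝ)).indicator {k : ℕ | i < k}).congr fun k => by
            rw [Set.indicator_apply]; simp only [Set.mem_setOf_eq]
      _ = ∑ i ∈ Finset.range b, (1 - ∑ j ∈ Finset.range (i + 1), ppmf (b : ℝ) j) :=
          Finset.sum_congr rfl fun i _ => tsum_tail _ i
  rw [hL, hR]
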